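/- Let Σ be a symmetric positive definite 2n×2n real matrix such that the complex Hermitian matrix Σ + (iℏ/2)J is positive semidefinite. Then the covariance ellipsoid Ω = {z ∈ ℝ^{2n} : ⟨Σ⁻¹z, z⟩ ≤ 2} satisfies Ω^{ℏ,σ} ⊆ Ω, and consequently there exists a linear symplectic automorphism S of ℝ^{2n} with S(B^{2n}(√ℏ)) ⊆ Ω (Ω is quantum admissible). -/

import Mathlib

open MeasureTheory Real Metric
open scoped RealInnerProductSpace Pointwise

noncomputable section

/-- `ℝⁿ` with its Euclidean structure. -/
abbrev En (n : ℕ) := EuclideanSpace ℝ (Fin n)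

/-- The phase space `ℝ²ⁿ = ℝⁿ × ℝⁿ` with its Euclidean structure, the first block of
coordinates being the positions `x` and the second block the momenta `p`. -/
abbrev PS (n : ℕ) := EuclideanSpace ℝ (Fin n ⊕ Fin n)

/-- The standard symplectic matrix `J = [[0, I], [-I, 0]]`. -/
def Jmat (n : ℕ) : Matrix (Fin n ⊕ Fin n) (Fin n ⊕ Fin n) ℝ :=
  Matrix.fromBlocks 0 1 (-1) 0

/-- The standard symplectic form `σ(z, z') = ⟨Jz, z'⟩`. -/
def symp (n : ℕ) (z z' : PS n) : ℝ := ⟪(Matrix.toEuclideanLin (Jmat n)) z, z'⟫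

/-- The quadratic form `z ↦ ⟨Mz, z⟩`. -/
def qf {m : Type*} [Fintype m] [DecidableEq m] (M : Matrix m m ℝ)
    (z : EuclideanSpace ℝ m) : ℝ := ⟪(Matrix.toEuclideanLin M) z, z⟫

/-- The symplectic `ℏ`-polar dual `Ω^{ℏ,σ} = {z' : ∀ z ∈ Ω, σ(z, z') ≤ ℏ}`. -/
def sympDual (n : ℕ) (ℏ : ℝ) (Ω : Set (PS n)) : Set (PS n) :=
  {z' | ∀ z ∈ Ω, symp n z z' ≤ ℏ}

/-- A linear automorphism of `ℝ²ⁿ` is symplectic if it preserves the symplectic form. -/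
def IsSymplectic {n : ℕ} (S : PS n ≃ₗ[ℝ] PS n) : Prop :=
  ∀ z z', symp n (S z) (S z') = symp n z z'

open scoped ComplexOrder

section Stmt14Aux

set_option linter.unusedSectionVars false

open Matrix

variable {m : Type*} [Fintype m] [DecidableEq m]

private lemma dot_cs (x y : m → ℝ) : (x ⬝ᵥ y)^2 ≤ (x ⬝ᵥ x) * (y ⬝ᵥ y) := by
  simpa [dotProduct, sq] using Finset.sum_mul_sq_le_sq_mul_sq Finset.univ x y

private lemma dot_self_nonneg (x : m → ℝ) : 0 ≤ x ⬝ᵥ x :=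
  Finset.sum_nonneg fun i _ => mul_self_nonneg _

private lemma transpose_of_herm {M : Matrix m m ℝ} (h : M.IsHermitian) : Mᵀ = M := by
  rw [← Matrix.conjTranspose_eq_transpose_of_trivial]; exact h

private lemma dot_symm {M : Matrix m m ℝ} (h : Mᵀ = M) (v w : m → ℝ) :
    v ⬝ᵥ M *ᵥ w = (M *ᵥ v) ⬝ᵥ w := by
  rw [dotProduct_mulVec, ← mulVec_transpose, h]

private lemma posDef_of_det {M : Matrix m m ℝ} (h : M.PosSemidef) (hdet : M.det ≠ 0) :
    M.PosDef := by
  refine posDef_iff_dotProduct_mulVec.mpr ⟨h.1, fun x hx => ?_⟩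
  rcases (h.dotProduct_mulVec_nonneg x).lt_or_eq with hlt | heq
  · simpa using hlt
  · exfalso
    apply hx
    have h0 : M *ᵥ x = 0 := (h.dotProduct_mulVec_zero_iff x).mp heq.symm
    have h1 := congrArg (fun y => M⁻¹ *ᵥ y) h0
    simpa [mulVec_mulVec, Matrix.nonsing_inv_mul M (isUnit_iff_ne_zero.mpr hdet)] using h1

private lemma inv_qf_bound {R : Matrix m m ℝ} (hR : R.PosDef) {c : ℝ} (hc : 0 < c)
    (hlb : ∀ x : m → ℝ, c^2 * (x ⬝ᵥ x) ≤ x ⬝ᵥ (R * R) *ᵥ x) :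
    ∀ v : m → ℝ, v ⬝ᵥ R⁻¹ *ᵥ v ≤ c⁻¹ * (v ⬝ᵥ v) := by
  intro v
  have hdet : IsUnit R.det := isUnit_iff_ne_zero.mpr hR.det_pos.ne'
  set y := R⁻¹ *ᵥ v with hy
  have hRy : R *ᵥ y = v := by
    rw [hy, mulVec_mulVec, Matrix.mul_nonsing_inv R hdet, one_mulVec]
  have hRsymm : Rᵀ = R := transpose_of_herm hR.isHermitian
  have hLHS : v ⬝ᵥ R⁻¹ *ᵥ v = v ⬝ᵥ y := rfl
  have hnn : 0 ≤ v ⬝ᵥ y := by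
    rw [← hLHS]
    simpa using hR.inv.posSemidef.dotProduct_mulVec_nonneg v
  have hyy : c^2 * (y ⬝ᵥ y) ≤ v ⬝ᵥ v := by
    have h2 := hlb y
    rwa [← mulVec_mulVec, dot_symm hRsymm, hRy] at h2
  have hcs := dot_cs (R *ᵥ y) y
  rw [hRy] at hcs
  have hvv : 0 ≤ v ⬝ᵥ v := dot_self_nonneg v
  have hyy0 : 0 ≤ y ⬝ᵥ y := dot_self_nonneg y
  rw [hLHS, inv_mul_eq_div, le_div_iff₀ hc]
  nlinarith [hcs, hyy, hnn, hvv, hyy0, hc.le, mul_le_mul_of_nonneg_left hyy hvv,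
    mul_le_mul_of_nonneg_left hcs (mul_pos hc hc).le]

private lemma flip_bound {M : Matrix m m ℝ} {c : ℝ} (hc : 0 ≤ c)
    (h : ∀ y : m → ℝ, y ⬝ᵥ (M * Mᵀ) *ᵥ y ≤ c * (y ⬝ᵥ y)) :
    ∀ x : m → ℝ, x ⬝ᵥ (Mᵀ * M) *ᵥ x ≤ c * (x ⬝ᵥ x) := by
  intro x
  set u := M *ᵥ x with hu
  have ha : x ⬝ᵥ (Mᵀ * M) *ᵥ x = u ⬝ᵥ u := by
    rw [← mulVec_mulVec, dotProduct_mulVec, vecMul_transpose, ← hu]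
  set w := Mᵀ *ᵥ u with hw
  have haw : u ⬝ᵥ u = x ⬝ᵥ w := by
    rw [hw, hu, dotProduct_mulVec x, vecMul_transpose, dotProduct_comm]
  have hww : w ⬝ᵥ w = u ⬝ᵥ (M * Mᵀ) *ᵥ u := by
    rw [← mulVec_mulVec, dotProduct_mulVec u, ← mulVec_transpose, hw]
  have hcs := dot_cs x w
  have h1 : w ⬝ᵥ w ≤ c * (u ⬝ᵥ u) := hww ▸ h u
  have huu : 0 ≤ u ⬝ᵥ u := dot_self_nonneg u
  have hxx : 0 ≤ x ⬝ᵥ x := dot_self_nonneg x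
  rw [ha]
  rcases huu.lt_or_eq with hpos | hzero
  · have h2 : (u ⬝ᵥ u)^2 ≤ (x ⬝ᵥ x) * (c * (u ⬝ᵥ u)) := by
      calc (u ⬝ᵥ u)^2 = (x ⬝ᵥ w)^2 := by rw [haw]
        _ ≤ (x ⬝ᵥ x) * (w ⬝ᵥ w) := hcs
        _ ≤ (x ⬝ᵥ x) * (c * (u ⬝ᵥ u)) := mul_le_mul_of_nonneg_left h1 hxx
    nlinarith [hpos]
  · rw [← hzero]
    positivity

private lemma quantum_re {Sig Jm : Matrix m m ℝ} {t : ℝ}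
    (h : (Sig.map (fun a => (a : ℂ)) +
      (Complex.I * Complex.ofReal t) • Jm.map (fun a => (a : ℂ))).PosSemidef)
    (z w : m → ℝ) :
    t * (z ⬝ᵥ Jm *ᵥ w) - t * (w ⬝ᵥ Jm *ᵥ z) ≤ z ⬝ᵥ Sig *ᵥ z + w ⬝ᵥ Sig *ᵥ w := by
  have h2 := h.dotProduct_mulVec_nonneg (fun i => (z i : ℂ) + Complex.I * (w i : ℂ))
  rw [Complex.le_def] at h2
  have hre := h2.1
  simp only [Complex.zero_re] at hre
  set x : m → ℂ := fun i => (z i : ℂ) + Complex.I * (w i : ℂ) with hx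
  have key : (star x ⬝ᵥ ((Sig.map (fun a => (a : ℂ)) +
      (Complex.I * Complex.ofReal t) • Jm.map (fun a => (a : ℂ))) *ᵥ x)).re
      = z ⬝ᵥ Sig *ᵥ z + w ⬝ᵥ Sig *ᵥ w - (t * (z ⬝ᵥ Jm *ᵥ w) - t * (w ⬝ᵥ Jm *ᵥ z)) := by
    simp only [dotProduct, mulVec, Pi.star_apply, hx, Matrix.add_apply, Matrix.smul_apply, map_apply,
      smul_eq_mul, Finset.mul_sum]
    rw [Complex.re_sum]
    simp only [Finset.sum_sub_distrib, Finset.sum_add_distrib, Complex.re_sum]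
    simp only [← Finset.sum_add_distrib, ← Finset.sum_sub_distrib]
    refine Finset.sum_congr rfl fun i _ => ?_
    refine Finset.sum_congr rfl fun j _ => ?_
    simp only [Complex.star_def, map_add, _root_.map_mul, Complex.conj_ofReal, Complex.conj_I,
      Complex.mul_re, Complex.add_re, Complex.mul_im, Complex.add_im, Complex.ofReal_re,
      Complex.ofReal_im, Complex.I_re, Complex.I_im, Complex.neg_re, Complex.neg_im]
    ring
  linarith [key ▸ hre]

open scoped MatrixOrder in
private lemma psd_sqrt_exists {M : Matrix m m ℝ} (h : M.PosSemidef) :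
    ∃ A : Matrix m m ℝ, A.PosSemidef ∧ A * A = M :=
  ⟨CFC.sqrt M, Matrix.nonneg_iff_posSemidef.mp (CFC.sqrt_nonneg M),
    CFC.sqrt_mul_sqrt_self M (Matrix.nonneg_iff_posSemidef.mpr h)⟩

open scoped MatrixOrder in
private lemma psd_eq_of_sq {C R : Matrix m m ℝ} (hC : C.PosSemidef) (hR : R.PosSemidef)
    (h : C ^ 2 = R ^ 2) : C = R :=
  (CFC.sq_eq_sq_iff C R (Matrix.nonneg_iff_posSemidef.mpr hC)
    (Matrix.nonneg_iff_posSemidef.mpr hR)).mp h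

end Stmt14Aux

open Matrix in
theorem part2test (n : ℕ) (ℏ : ℝ) (hℏ : 0 < ℏ)
    (Sig : Matrix (Fin n ⊕ Fin n) (Fin n ⊕ Fin n) ℝ) (hSig : Sig.PosDef)
    (J : Matrix (Fin n ⊕ Fin n) (Fin n ⊕ Fin n) ℝ)
    (hJdef : J = Jmat n)
    (hJT : Jᵀ = -J)
    (hJJ : J * J = -1)
    (hJdet : J.det ≠ 0)
    (hJinv : J⁻¹ = -J)
    (hSunit : IsUnit Sig.det)
    (hkey : ∀ u : (Fin n ⊕ Fin n) → ℝ,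
      ℏ^2/4 * (u ⬝ᵥ Sig⁻¹ *ᵥ u) ≤ (J *ᵥ u) ⬝ᵥ Sig *ᵥ (J *ᵥ u))
    (hqf : ∀ (M : Matrix (Fin n ⊕ Fin n) (Fin n ⊕ Fin n) ℝ) (z : PS n),
      qf M z = (M *ᵥ (z : (Fin n ⊕ Fin n) → ℝ)) ⬝ᵥ (z : (Fin n ⊕ Fin n) → ℝ))
    (hsymp : ∀ z z' : PS n,
      symp n z z' = (J *ᵥ (z : (Fin n ⊕ Fin n) → ℝ)) ⬝ᵥ (z' : (Fin n ⊕ Fin n) → ℝ))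
    (hnorm : ∀ z : PS n, (z : (Fin n ⊕ Fin n) → ℝ) ⬝ᵥ (z : (Fin n ⊕ Fin n) → ℝ) = ‖z‖^2) :
    ∃ S : PS n ≃ₗ[ℝ] PS n, IsSymplectic S ∧
      ⇑S '' Metric.closedBall (0 : PS n) (Real.sqrt ℏ) ⊆ {z | qf Sig⁻¹ z ≤ 2} := by
  -- -- existence of a quantum blob inside the ellipsoid
    obtain ⟨A, hAps, hA2⟩ : ∃ A : Matrix (Fin n ⊕ Fin n) (Fin n ⊕ Fin n) ℝ,
        A.PosSemidef ∧ A * A = Sig :=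
      psd_sqrt_exists hSig.posSemidef
    have hAsymm : Aᵀ = A := transpose_of_herm hAps.1
    have hAdet : A.det ≠ 0 := by
      intro h
      exact hSig.det_pos.ne' (by rw [← hA2, Matrix.det_mul, h, mul_zero])
    have hAunit : IsUnit A.det := isUnit_iff_ne_zero.mpr hAdet
    have hSinv_eq : Sig⁻¹ = A⁻¹ * A⁻¹ := by rw [← hA2, Matrix.mul_inv_rev]
    set K : Matrix (Fin n ⊕ Fin n) (Fin n ⊕ Fin n) ℝ := A * J * A with hKdef
    have hKT : Kᵀ = -K := by
      rw [hKdef, Matrix.transpose_mul, Matrix.transpose_mul, hAsymm, hJT]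
      simp only [Matrix.neg_mul, Matrix.mul_neg, Matrix.mul_assoc]
    have hKdet : K.det ≠ 0 := by
      rw [hKdef, Matrix.det_mul, Matrix.det_mul]
      exact mul_ne_zero (mul_ne_zero hAdet hJdet) hAdet
    have hKunit : IsUnit K.det := isUnit_iff_ne_zero.mpr hKdet
    set N : Matrix (Fin n ⊕ Fin n) (Fin n ⊕ Fin n) ℝ := Kᵀ * K with hNdef
    have hNps : N.PosSemidef := by
      have h := Matrix.posSemidef_conjTranspose_mul_self K
      rwa [Matrix.conjTranspose_eq_transpose_of_trivial] at h
    have hNK2 : N = -(K * K) := by rw [hNdef, hKT, Matrix.neg_mul]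
    have hKKT : K * Kᵀ = N := by
      rw [hKT, Matrix.mul_neg]
      exact hNK2.symm
    have hNdet : N.det ≠ 0 := by
      rw [hNdef, Matrix.det_mul, Matrix.det_transpose]
      exact mul_ne_zero hKdet hKdet
    have hNunit : IsUnit N.det := isUnit_iff_ne_zero.mpr hNdet
    have hKN : K * N = N * K := by
      rw [hNK2]
      simp only [Matrix.mul_neg, Matrix.neg_mul, Matrix.mul_assoc]
    -- lower bound for N
    have hNlb : ∀ x : (Fin n ⊕ Fin n) → ℝ, ℏ^2/4 * (x ⬝ᵥ x) ≤ x ⬝ᵥ N *ᵥ x := by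
      intro x
      have e1 : x ⬝ᵥ N *ᵥ x = (K *ᵥ x) ⬝ᵥ (K *ᵥ x) := by
        rw [hNdef, ← Matrix.mulVec_mulVec, Matrix.dotProduct_mulVec, Matrix.vecMul_transpose]
      have e2 : K *ᵥ x = A *ᵥ (J *ᵥ (A *ᵥ x)) := by
        rw [Matrix.mulVec_mulVec, Matrix.mulVec_mulVec, hKdef]
      have e3 : ∀ b : (Fin n ⊕ Fin n) → ℝ, (A *ᵥ b) ⬝ᵥ (A *ᵥ b) = b ⬝ᵥ Sig *ᵥ b := by
        intro b
        rw [← dot_symm hAsymm, Matrix.mulVec_mulVec, hA2]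
      have e4 : (A *ᵥ x) ⬝ᵥ Sig⁻¹ *ᵥ (A *ᵥ x) = x ⬝ᵥ x := by
        have h5 : A * (A⁻¹ * A⁻¹) * A = 1 := by
          rw [Matrix.mul_nonsing_inv_cancel_left _ _ hAunit]
          exact Matrix.nonsing_inv_mul A hAunit
        rw [← dot_symm hAsymm, Matrix.mulVec_mulVec, Matrix.mulVec_mulVec, hSinv_eq, h5,
          Matrix.one_mulVec]
      calc ℏ^2/4 * (x ⬝ᵥ x)
          = ℏ^2/4 * ((A *ᵥ x) ⬝ᵥ Sig⁻¹ *ᵥ (A *ᵥ x)) := by rw [e4]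
        _ ≤ (J *ᵥ (A *ᵥ x)) ⬝ᵥ Sig *ᵥ (J *ᵥ (A *ᵥ x)) := hkey _
        _ = x ⬝ᵥ N *ᵥ x := by rw [← e3, ← e2, ← e1]
    -- the square root of N
    obtain ⟨R, hRps, hR2⟩ : ∃ R : Matrix (Fin n ⊕ Fin n) (Fin n ⊕ Fin n) ℝ,
        R.PosSemidef ∧ R * R = N :=
      psd_sqrt_exists hNps
    have hRsymm : Rᵀ = R := transpose_of_herm hRps.1
    have hRdet : R.det ≠ 0 := by
      intro h
      exact hNdet (by rw [← hR2, Matrix.det_mul, h, mul_zero])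
    have hRunit : IsUnit R.det := isUnit_iff_ne_zero.mpr hRdet
    have hRpd : R.PosDef := posDef_of_det hRps hRdet
    have hcancelR : ∀ X Y : Matrix (Fin n ⊕ Fin n) (Fin n ⊕ Fin n) ℝ,
        R * X = R * Y → X = Y := by
      intro X Y hxy
      have h1 := congrArg (fun Z => R⁻¹ * Z) hxy
      simpa [← Matrix.mul_assoc, Matrix.nonsing_inv_mul _ hRunit] using h1
    have hKinvN : K⁻¹ = Kᵀ * N⁻¹ := Matrix.inv_eq_right_inv (by
      rw [← Matrix.mul_assoc, hKKT, Matrix.mul_nonsing_inv _ hNunit])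
    -- R commutes with K
    have hRX : R * (K * N⁻¹) = R⁻¹ * K := by
      apply hcancelR
      rw [← Matrix.mul_assoc, ← Matrix.mul_assoc, hR2,
        Matrix.mul_nonsing_inv_cancel_left _ _ hRunit, ← hKN,
        Matrix.mul_nonsing_inv_cancel_right _ _ hNunit]
    set C : Matrix (Fin n ⊕ Fin n) (Fin n ⊕ Fin n) ℝ := K * R * K⁻¹ with hCdef
    have hC1 : C = Kᵀ * R⁻¹ * K := by
      rw [hCdef, hKinvN, hKT]
      simp only [Matrix.neg_mul, Matrix.mul_neg, Matrix.mul_assoc, neg_inj]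
      rw [hRX]
    have hCps : C.PosSemidef := by
      rw [hC1, ← Matrix.conjTranspose_eq_transpose_of_trivial]
      exact (hRpd.inv.posSemidef).conjTranspose_mul_mul_same K
    have hCsq : C ^ 2 = R ^ 2 := by
      rw [pow_two, pow_two, hR2, hCdef]
      simp only [Matrix.mul_assoc]
      rw [Matrix.nonsing_inv_mul_cancel_left _ _ hKunit, ← Matrix.mul_assoc R R, hR2,
        ← Matrix.mul_assoc K N, hKN, Matrix.mul_nonsing_inv_cancel_right _ _ hKunit]
    have hCR : C = R := psd_eq_of_sq hCps hRps hCsq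
    have hKR : K * R = R * K := by
      have h1 := congrArg (fun X => X * K) hCR
      simp only [hCdef] at h1
      rwa [Matrix.mul_assoc (K * R), Matrix.nonsing_inv_mul _ hKunit, Matrix.mul_one] at h1
    have hKRi : R⁻¹ * K = K * R⁻¹ := by
      apply hcancelR
      rw [← Matrix.mul_assoc, Matrix.mul_nonsing_inv _ hRunit, Matrix.one_mul,
        ← Matrix.mul_assoc, ← hKR, Matrix.mul_assoc, Matrix.mul_nonsing_inv _ hRunit,
        Matrix.mul_one]
    have hRinv2 : R⁻¹ * R⁻¹ = N⁻¹ := by rw [← Matrix.mul_inv_rev, hR2]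
    -- the matrix P
    set P : Matrix (Fin n ⊕ Fin n) (Fin n ⊕ Fin n) ℝ := A * R⁻¹ * A with hPdef
    have hPps : P.PosSemidef := by
      have h := (hRpd.inv.posSemidef).mul_mul_conjTranspose_same A
      rwa [Matrix.conjTranspose_eq_transpose_of_trivial, hAsymm] at h
    have hRinvdet : R⁻¹.det ≠ 0 := by
      have h1 : R⁻¹.det * R.det = 1 := by
        rw [← Matrix.det_mul, Matrix.nonsing_inv_mul _ hRunit, Matrix.det_one]
      intro h
      rw [h, zero_mul] at h1
      exact zero_ne_one h1
    have hPdet : P.det ≠ 0 := by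
      rw [hPdef, Matrix.det_mul, Matrix.det_mul]
      exact mul_ne_zero (mul_ne_zero hAdet hRinvdet) hAdet
    -- P is symplectic
    have hNinv : N⁻¹ = -(K⁻¹ * K⁻¹) := Matrix.inv_eq_right_inv (by
      rw [hNK2]
      simp only [Matrix.neg_mul, Matrix.mul_neg, neg_neg, Matrix.mul_assoc]
      rw [Matrix.mul_nonsing_inv_cancel_left _ _ hKunit, Matrix.mul_nonsing_inv _ hKunit])
    have hKNinv : K * N⁻¹ = -K⁻¹ := by
      rw [hNinv, Matrix.mul_neg, Matrix.mul_nonsing_inv_cancel_left _ _ hKunit]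
    have hPJP : P * J * P = J := by
      have step1 : P * J * P = A * (R⁻¹ * (K * (R⁻¹ * A))) := by
        rw [hPdef, hKdef]
        simp only [Matrix.mul_assoc]
      have step2 : R⁻¹ * (K * (R⁻¹ * A)) = (K * N⁻¹) * A := by
        rw [← Matrix.mul_assoc, hKRi, Matrix.mul_assoc K R⁻¹, ← Matrix.mul_assoc R⁻¹ R⁻¹,
          hRinv2, ← Matrix.mul_assoc]
      have step3 : K⁻¹ = A⁻¹ * (J⁻¹ * A⁻¹) := by
        rw [hKdef, Matrix.mul_inv_rev, Matrix.mul_inv_rev]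
      rw [step1, step2, hKNinv, step3, hJinv]
      simp only [Matrix.mul_neg, Matrix.neg_mul, neg_neg, Matrix.mul_assoc]
      rw [Matrix.nonsing_inv_mul _ hAunit, Matrix.mul_one,
        Matrix.mul_nonsing_inv_cancel_left _ _ hAunit]
    -- the square root of P
    obtain ⟨Sm, hSmps, hSm2⟩ : ∃ S : Matrix (Fin n ⊕ Fin n) (Fin n ⊕ Fin n) ℝ,
        S.PosSemidef ∧ S * S = P :=
      psd_sqrt_exists hPps
    have hSmsymm : Smᵀ = Sm := transpose_of_herm hSmps.1
    have hSmdet : Sm.det ≠ 0 := by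
      intro h
      exact hPdet (by rw [← hSm2, Matrix.det_mul, h, mul_zero])
    have hSmunit : IsUnit Sm.det := isUnit_iff_ne_zero.mpr hSmdet
    have hJJT : J * Jᵀ = 1 := by rw [hJT, Matrix.mul_neg, hJJ, neg_neg]
    -- Sm is symplectic
    have hSJS : Sm * J * Sm = J := by
      have hPinvJ : P⁻¹ = Jᵀ * P * J := Matrix.inv_eq_right_inv (by
        rw [hJT]
        simp only [Matrix.neg_mul, Matrix.mul_neg, Matrix.mul_assoc]
        rw [← Matrix.mul_assoc, ← Matrix.mul_assoc, hPJP, hJJ]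
        simp)
      set D : Matrix (Fin n ⊕ Fin n) (Fin n ⊕ Fin n) ℝ := Jᵀ * Sm * J with hDdef
      have hDps : D.PosSemidef := by
        rw [hDdef, ← Matrix.conjTranspose_eq_transpose_of_trivial]
        exact hSmps.conjTranspose_mul_mul_same J
      have hSminv2 : Sm⁻¹ * Sm⁻¹ = P⁻¹ := by rw [← Matrix.mul_inv_rev, hSm2]
      have hDsq : D ^ 2 = (Sm⁻¹) ^ 2 := by
        rw [pow_two, pow_two, hDdef, hSminv2, hPinvJ, ← hSm2]
        simp only [Matrix.mul_assoc]
        rw [← Matrix.mul_assoc J Jᵀ, hJJT, Matrix.one_mul]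
      have hSminv_ps : (Sm⁻¹).PosSemidef := (posDef_of_det hSmps hSmdet).inv.posSemidef
      have hD : D = Sm⁻¹ := psd_eq_of_sq hDps hSminv_ps hDsq
      have h2 : Sm * J = J * Sm⁻¹ := by
        have h3 := congrArg (fun X => J * X) hD
        simp only [hDdef] at h3
        rwa [← Matrix.mul_assoc, ← Matrix.mul_assoc, hJJT, Matrix.one_mul] at h3
      rw [h2, Matrix.mul_assoc, Matrix.nonsing_inv_mul _ hSmunit, Matrix.mul_one]
    -- the final quadratic bound
    have hNlb2 : ∀ x : (Fin n ⊕ Fin n) → ℝ, (ℏ/2)^2 * (x ⬝ᵥ x) ≤ x ⬝ᵥ (R * R) *ᵥ x := by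
      intro x
      rw [hR2]
      calc (ℏ/2)^2 * (x ⬝ᵥ x) = ℏ^2/4 * (x ⬝ᵥ x) := by ring
        _ ≤ x ⬝ᵥ N *ᵥ x := hNlb x
    set Mm : Matrix (Fin n ⊕ Fin n) (Fin n ⊕ Fin n) ℝ := A⁻¹ * Sm with hMdef
    have hAinvT : (A⁻¹)ᵀ = A⁻¹ := by rw [Matrix.transpose_nonsing_inv, hAsymm]
    have hMT : Mmᵀ = Sm * A⁻¹ := by rw [hMdef, Matrix.transpose_mul, hSmsymm, hAinvT]
    have hMMT : Mm * Mmᵀ = R⁻¹ := by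
      rw [hMdef, hMT, Matrix.mul_assoc, ← Matrix.mul_assoc Sm Sm A⁻¹, hSm2, hPdef,
        Matrix.mul_nonsing_inv_cancel_right _ _ hAunit,
        Matrix.nonsing_inv_mul_cancel_left _ _ hAunit]
    have hflipH : ∀ y : (Fin n ⊕ Fin n) → ℝ, y ⬝ᵥ (Mm * Mmᵀ) *ᵥ y ≤ (2/ℏ) * (y ⬝ᵥ y) := by
      intro y
      rw [hMMT]
      have h1 := inv_qf_bound hRpd (by positivity : (0:ℝ) < ℏ/2) hNlb2 y
      rwa [show ((ℏ:ℝ)/2)⁻¹ = 2/ℏ by rw [inv_div]] at h1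
    have hflip := flip_bound (by positivity : (0:ℝ) ≤ 2/ℏ) hflipH
    have hMTM : Mmᵀ * Mm = Sm * Sig⁻¹ * Sm := by
      rw [hMT, hMdef, hSinv_eq]
      simp only [Matrix.mul_assoc]
    have hfinal : ∀ x : (Fin n ⊕ Fin n) → ℝ,
        (Sig⁻¹ *ᵥ (Sm *ᵥ x)) ⬝ᵥ (Sm *ᵥ x) ≤ 2/ℏ * (x ⬝ᵥ x) := by
      intro x
      have h1 := hflip x
      rw [hMTM] at h1
      have h2 : x ⬝ᵥ (Sm * Sig⁻¹ * Sm) *ᵥ x = (Sig⁻¹ *ᵥ (Sm *ᵥ x)) ⬝ᵥ (Sm *ᵥ x) := by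
        rw [Matrix.mul_assoc, ← Matrix.mulVec_mulVec, dot_symm hSmsymm, ← Matrix.mulVec_mulVec,
          dotProduct_comm]
      rw [h2] at h1
      exact h1
    -- build the linear equivalence
    have hcomp1 : Matrix.toEuclideanLin Sm ∘ₗ Matrix.toEuclideanLin Sm⁻¹ = LinearMap.id := by
      apply LinearMap.ext
      intro x
      show WithLp.toLp 2 (Sm *ᵥ (Sm⁻¹ *ᵥ (x : (Fin n ⊕ Fin n) → ℝ))) = WithLp.toLp 2 (x : (Fin n ⊕ Fin n) → ℝ)
      rw [Matrix.mulVec_mulVec, Matrix.mul_nonsing_inv _ hSmunit, Matrix.one_mulVec]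
    have hcomp2 : Matrix.toEuclideanLin Sm⁻¹ ∘ₗ Matrix.toEuclideanLin Sm = LinearMap.id := by
      apply LinearMap.ext
      intro x
      show WithLp.toLp 2 (Sm⁻¹ *ᵥ (Sm *ᵥ (x : (Fin n ⊕ Fin n) → ℝ))) = WithLp.toLp 2 (x : (Fin n ⊕ Fin n) → ℝ)
      rw [Matrix.mulVec_mulVec, Matrix.nonsing_inv_mul _ hSmunit, Matrix.one_mulVec]
    set Slin : PS n ≃ₗ[ℝ] PS n := LinearEquiv.ofLinear (Matrix.toEuclideanLin Sm)
      (Matrix.toEuclideanLin Sm⁻¹) hcomp1 hcomp2 with hSlindef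
    have happ : ∀ w : PS n,
        (Slin w : (Fin n ⊕ Fin n) → ℝ) = Sm *ᵥ (w : (Fin n ⊕ Fin n) → ℝ) := fun w => rfl
    refine ⟨Slin, ?_, ?_⟩
    · intro z z'
      rw [hsymp, hsymp, happ, happ]
      rw [dot_symm hSmsymm, Matrix.mulVec_mulVec, Matrix.mulVec_mulVec, hSJS]
    · rintro u ⟨x, hx, rfl⟩
      show qf Sig⁻¹ (Slin x) ≤ 2
      rw [hqf, happ]
      have hxx : (x : (Fin n ⊕ Fin n) → ℝ) ⬝ᵥ (x : (Fin n ⊕ Fin n) → ℝ) ≤ ℏ := by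
        rw [hnorm]
        have h1 : ‖x‖ ≤ Real.sqrt ℏ := by
          rw [Metric.mem_closedBall, dist_zero_right] at hx
          exact hx
        calc ‖x‖^2 ≤ (Real.sqrt ℏ)^2 := by nlinarith [norm_nonneg x, Real.sqrt_nonneg ℏ]
          _ = ℏ := Real.sq_sqrt hℏ.le
      calc (Sig⁻¹ *ᵥ (Sm *ᵥ (x : (Fin n ⊕ Fin n) → ℝ))) ⬝ᵥ (Sm *ᵥ (x : (Fin n ⊕ Fin n) → ℝ))
          ≤ 2/ℏ * ((x : (Fin n ⊕ Fin n) → ℝ) ⬝ᵥ (x : (Fin n ⊕ Fin n) → ℝ)) := hfinal x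
        _ ≤ 2/ℏ * ℏ := mul_le_mul_of_nonneg_left hxx (by positivity)
        _ = 2 := div_mul_cancel₀ 2 hℏ.ne'

/-- if `Σ` is a symmetric positive definite `2n×2n` matrix such that
`Σ + (iℏ/2)J` is positive semidefinite (as a complex Hermitian matrix), then the
covariance ellipsoid `Ω = {⟨Σ⁻¹z,z⟩ ≤ 2}` satisfies `Ω^{ℏ,σ} ⊆ Ω`, and consequently `Ω`
is quantum admissible (contains a quantum blob `S(B²ⁿ(√ℏ))`). -/
theorem stmt14 (n : ℕ) (ℏ : ℝ) (hℏ : 0 < ℏ)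
    (Sig : Matrix (Fin n ⊕ Fin n) (Fin n ⊕ Fin n) ℝ) (hSig : Sig.PosDef)
    (hquantum : (Sig.map (fun a => (a : ℂ)) +
        (Complex.I * Complex.ofReal (ℏ / 2)) • (Jmat n).map (fun a => (a : ℂ))).PosSemidef) :
    sympDual n ℏ {z | qf Sig⁻¹ z ≤ 2} ⊆ {z | qf Sig⁻¹ z ≤ 2} ∧
    ∃ S : PS n ≃ₗ[ℝ] PS n, IsSymplectic S ∧
      ⇑S '' closedBall (0 : PS n) (Real.sqrt ℏ) ⊆ {z | qf Sig⁻¹ z ≤ 2} := by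
  open Matrix in
  -- notation
  set J : Matrix (Fin n ⊕ Fin n) (Fin n ⊕ Fin n) ℝ := Jmat n with hJdef
  -- basic facts about J
  have hJT : Jᵀ = -J := by
    rw [hJdef]
    simp [Jmat, Matrix.fromBlocks_transpose, Matrix.fromBlocks_neg]
  have hJJ : J * J = -1 := by
    rw [hJdef]
    simp [Jmat, Matrix.fromBlocks_multiply]
    rw [← Matrix.fromBlocks_one, Matrix.fromBlocks_neg]
    simp
  have hJdet : J.det ≠ 0 := by
    intro h
    have h1 : (J * J).det = 0 := by rw [Matrix.det_mul, h, mul_zero]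
    rw [hJJ] at h1
    have h2 : ((-1 : Matrix (Fin n ⊕ Fin n) (Fin n ⊕ Fin n) ℝ)).det
        = (-1 : ℝ) ^ Fintype.card (Fin n ⊕ Fin n) := by
      rw [show ((-1 : Matrix (Fin n ⊕ Fin n) (Fin n ⊕ Fin n) ℝ)) = -(1 : Matrix _ _ ℝ) from rfl,
        Matrix.det_neg, Matrix.det_one, mul_one]
    rw [h2] at h1
    exact (pow_ne_zero _ (by norm_num : (-1 : ℝ) ≠ 0)) h1
  have hJunit : IsUnit J.det := isUnit_iff_ne_zero.mpr hJdet
  have hJinv : J⁻¹ = -J := Matrix.inv_eq_right_inv (by rw [Matrix.mul_neg, hJJ, neg_neg])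
  -- antisymmetry of the form
  have hanti : ∀ a b : (Fin n ⊕ Fin n) → ℝ, b ⬝ᵥ J *ᵥ a = -(a ⬝ᵥ J *ᵥ b) := by
    intro a b
    rw [Matrix.dotProduct_mulVec, ← Matrix.mulVec_transpose, hJT, Matrix.neg_mulVec,
      neg_dotProduct, dotProduct_comm]
  have hJorth : ∀ a b : (Fin n ⊕ Fin n) → ℝ, (J *ᵥ a) ⬝ᵥ (J *ᵥ b) = a ⬝ᵥ b := by
    intro a b
    rw [Matrix.dotProduct_mulVec, ← Matrix.mulVec_transpose, hJT, Matrix.neg_mulVec,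
      Matrix.mulVec_mulVec, hJJ]
    simp [Matrix.neg_mulVec]
  -- facts about Sig
  have hSunit : IsUnit Sig.det := isUnit_iff_ne_zero.mpr hSig.det_pos.ne'
  have hSsymm : Sigᵀ = Sig := transpose_of_herm hSig.isHermitian
  have hSinv_symm : (Sig⁻¹)ᵀ = Sig⁻¹ := transpose_of_herm hSig.inv.isHermitian
  -- the real quantum inequality
  have hq : ∀ z w : (Fin n ⊕ Fin n) → ℝ,
      ℏ * (z ⬝ᵥ J *ᵥ w) ≤ z ⬝ᵥ Sig *ᵥ z + w ⬝ᵥ Sig *ᵥ w := by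
    intro z w
    have h1 := quantum_re hquantum z w
    rw [hanti z w] at h1
    rw [hJdef]
    linarith
  -- the key inequality
  have hkey : ∀ u : (Fin n ⊕ Fin n) → ℝ,
      ℏ^2/4 * (u ⬝ᵥ Sig⁻¹ *ᵥ u) ≤ (J *ᵥ u) ⬝ᵥ Sig *ᵥ (J *ᵥ u) := by
    intro u
    have h1 := hq (J *ᵥ u) ((ℏ/2) • (Sig⁻¹ *ᵥ u))
    have e1 : (J *ᵥ u) ⬝ᵥ J *ᵥ ((ℏ/2) • (Sig⁻¹ *ᵥ u)) = (ℏ/2) * (u ⬝ᵥ Sig⁻¹ *ᵥ u) := by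
      rw [Matrix.mulVec_smul, dotProduct_smul, hJorth, smul_eq_mul]
    have e2 : ((ℏ/2) • (Sig⁻¹ *ᵥ u)) ⬝ᵥ Sig *ᵥ ((ℏ/2) • (Sig⁻¹ *ᵥ u))
        = (ℏ/2)^2 * (u ⬝ᵥ Sig⁻¹ *ᵥ u) := by
      rw [smul_dotProduct, Matrix.mulVec_smul, dotProduct_smul,
        Matrix.mulVec_mulVec, Matrix.mul_nonsing_inv _ hSunit, Matrix.one_mulVec,
        smul_eq_mul, smul_eq_mul, dotProduct_comm]
      ring
    rw [e1, e2] at h1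
    linarith
  -- bridges between EuclideanSpace and vectors
  have hqf : ∀ (M : Matrix (Fin n ⊕ Fin n) (Fin n ⊕ Fin n) ℝ) (z : PS n),
      qf M z = (M *ᵥ (z : (Fin n ⊕ Fin n) → ℝ)) ⬝ᵥ (z : (Fin n ⊕ Fin n) → ℝ) := by
    intro M z
    simp only [qf, Matrix.toEuclideanLin_apply, PiLp.inner_apply, RCLike.inner_apply,
      conj_trivial]
    rw [dotProduct_comm]; rfl
  have hsymp : ∀ z z' : PS n,
      symp n z z' = (J *ᵥ (z : (Fin n ⊕ Fin n) → ℝ)) ⬝ᵥ (z' : (Fin n ⊕ Fin n) → ℝ) := by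
    intro z z'
    rw [hJdef]
    simp only [symp, Matrix.toEuclideanLin_apply, PiLp.inner_apply, RCLike.inner_apply,
      conj_trivial]
    rw [dotProduct_comm]; rfl
  have hnorm : ∀ z : PS n, (z : (Fin n ⊕ Fin n) → ℝ) ⬝ᵥ (z : (Fin n ⊕ Fin n) → ℝ) = ‖z‖^2 := by
    intro z
    rw [← real_inner_self_eq_norm_sq]
    simp only [PiLp.inner_apply, RCLike.inner_apply, conj_trivial]
    rfl
  constructor
  · -- the polar dual inclusion
    intro z' hz'
    show qf Sig⁻¹ z' ≤ 2
    rw [hqf]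
    set v : (Fin n ⊕ Fin n) → ℝ := (z' : (Fin n ⊕ Fin n) → ℝ) with hv
    by_cases hv0 : v = 0
    · rw [hv0]
      simp
    · set y : (Fin n ⊕ Fin n) → ℝ := Jᵀ *ᵥ v with hy
      have hyJ : y = -(J *ᵥ v) := by rw [hy, hJT, Matrix.neg_mulVec]
      have hy0 : y ≠ 0 := by
        intro h0
        apply hv0
        have h1 : J *ᵥ v = 0 := by
          have := congrArg Neg.neg (hyJ ▸ h0)
          simpa using this
        have h2 := congrArg (fun w => J *ᵥ w) h1
        simp only [Matrix.mulVec_mulVec, hJJ, Matrix.mulVec_zero] at h2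
        have h3 : (-1 : Matrix (Fin n ⊕ Fin n) (Fin n ⊕ Fin n) ℝ) *ᵥ v = -v := by
          rw [show ((-1 : Matrix (Fin n ⊕ Fin n) (Fin n ⊕ Fin n) ℝ)) = -(1 : Matrix _ _ ℝ) from rfl,
            Matrix.neg_mulVec, Matrix.one_mulVec]
        rw [h3] at h2
        simpa using congrArg Neg.neg h2
      have hyS : 0 < y ⬝ᵥ Sig *ᵥ y := by simpa using hSig.dotProduct_mulVec_pos hy0
      set t : ℝ := y ⬝ᵥ Sig *ᵥ y with ht
      set c : ℝ := Real.sqrt (2 / t) with hc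
      have hc0 : 0 < c := Real.sqrt_pos.mpr (by positivity)
      have hqz : qf Sig⁻¹ (WithLp.toLp 2 (c • (Sig *ᵥ y) : (Fin n ⊕ Fin n) → ℝ) : PS n) = 2 := by
        rw [hqf]
        show (Sig⁻¹ *ᵥ (c • (Sig *ᵥ y))) ⬝ᵥ (c • (Sig *ᵥ y)) = 2
        rw [Matrix.mulVec_smul, Matrix.mulVec_mulVec, Matrix.nonsing_inv_mul _ hSunit,
          Matrix.one_mulVec, smul_dotProduct, dotProduct_smul, smul_eq_mul,
          smul_eq_mul, ← ht, ← mul_assoc, ← sq, hc, Real.sq_sqrt (by positivity),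
          div_mul_cancel₀ _ hyS.ne']
      have hmem : (WithLp.toLp 2 (c • (Sig *ᵥ y) : (Fin n ⊕ Fin n) → ℝ) : PS n) ∈ {z : PS n | qf Sig⁻¹ z ≤ 2} :=
        le_of_eq hqz
      have hd := hz' _ hmem
      rw [hsymp] at hd
      have hJz : (J *ᵥ (c • (Sig *ᵥ y) : (Fin n ⊕ Fin n) → ℝ)) ⬝ᵥ v = c * t := by
        rw [Matrix.mulVec_smul, smul_dotProduct, smul_eq_mul]
        congr 1
        rw [dotProduct_comm, Matrix.dotProduct_mulVec, ← Matrix.mulVec_transpose, ← hy, ht]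
      rw [hJz] at hd
      have hc2 : c^2 = 2/t := Real.sq_sqrt (by positivity)
      have hc2t : c^2 * t = 2 := by rw [hc2]; field_simp
      have h2t : 2 * t ≤ ℏ^2 := by nlinarith [hd, hc0.le, hyS, hc2t, mul_pos hc0 hyS]
      have hk := hkey v
      have hJvt : (J *ᵥ v) ⬝ᵥ Sig *ᵥ (J *ᵥ v) = t := by
        rw [ht, hyJ]
        simp [neg_dotProduct, dotProduct_neg, Matrix.mulVec_neg]
      rw [hJvt] at hk
      rw [dotProduct_comm]
      nlinarith [hk, h2t, hℏ, pow_pos hℏ 2]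
  · -- existence of a quantum blob inside the ellipsoid
    exact part2test n ℏ hℏ Sig hSig J hJdef hJT hJJ hJdet hJinv hSunit hkey hqf hsymp hnorm
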